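/- arXiv:1810.01372 — 2 statements merged into one kernel-verified Lean document; each statement's English description precedes it below -/
import Mathlib

section
/- Under the regularity assumption, let q : Ω → ℝ₊ be a random variable, f : ℝ₊ → ℝⁿ₊ nondecreasing with f(q) integrable, and X = f(q). Define q_i* = inf{q' ≥ 0 : V_i(f(q')) ≥ 0} and assume the banks are ordered so that ∞ =: q_0* ≥ q_1* ≥ q_2* ≥ ... ≥ q_n* ≥ q_{n+1}* := 0, and that for every i ≤ n and q' ≥ 0, V_i(f(q')) < 0 if and only if q' < q_i*. Let Δ_0 = I, δ_0 = (I − Πᵀ)p̄, and for k ≥ 1 let Δ_k = Δ(z⁽ᵏ⁾) and δ_k = δ(z⁽ᵏ⁾) with z⁽ᵏ⁾ = e_1 + ... + e_k. Then for every bank i ≤ n: 𝔼[V_i(X)] = e_iᵀ Σ_{k=0}^n (Δ_k 𝔼[f(q)·1_{q ∈ [q_{k+1}*, q_k*)}] − δ_k ℙ(q ∈ [q_{k+1}*, q_k*))); 𝔼[p_i(X)] = p̄_i + e_iᵀ Σ_{k=i}^n (Δ_k 𝔼[f(q)·1_{q ∈ [q_{k+1}*, q_k*)}] − δ_k ℙ(q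 ∈ [q_{k+1}*, q_k*))); and 𝔼[V_i(X)⁺] = e_iᵀ Σ_{k=0}^{i−1} (Δ_k 𝔼[f(q)·1_{q ∈ [q_{k+1}*, q_k*)}] − δ_k ℙ(q ∈ [q_{k+1}*, q_k*))). -/
open Matrix BigOperators MeasureTheory

noncomputable section

/-- Total liabilities `p̄_i = Σ_{j=1}^{n+1} L_{ij}`. -/
def pbar {n : ℕ} (L : Matrix (Fin n) (Fin (n + 1)) ℝ) (i : Fin n) : ℝ :=
  ∑ j, L i j

/-- Relative liabilities `π_{ij} = L_{ij} / p̄_i` if `p̄_i > 0`, else `0`. -/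
def relLiab {n : ℕ} (L : Matrix (Fin n) (Fin (n + 1)) ℝ) (i j : Fin n) : ℝ :=
  if 0 < pbar L i then L i j.castSucc / pbar L i else 0

/-- The interbank relative liabilities matrix `Π`. -/
def PiMat {n : ℕ} (L : Matrix (Fin n) (Fin (n + 1)) ℝ) : Matrix (Fin n) (Fin n) ℝ :=
  Matrix.of fun i j => relLiab L i j

/-- The clearing map in wealths `Ψ_x`. -/
def Psi {n : ℕ} (L : Matrix (Fin n) (Fin (n + 1)) ℝ) (αx αL : ℝ)
    (x V : Fin n → ℝ) (i : Fin n) : ℝ :=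
  if 0 ≤ V i then
    x i + ∑ j, relLiab L j i * max (pbar L j - max (-(V j)) 0) 0 - pbar L i
  else
    αx * x i + αL * ∑ j, relLiab L j i * max (pbar L j - max (-(V j)) 0) 0 - pbar L i

/-- The default indicator vector `z⁽ᵏ⁾ = e_1 + ... + e_k`. -/
def zvec (n k : ℕ) : Fin n → ℝ := fun i => if (i : ℕ) < k then 1 else 0

/-- The matrix `I − (I − (1−α_L)Λ) Πᵀ Λ` where `Λ = diag(z)`. -/
def Amat {n : ℕ} (L : Matrix (Fin n) (Fin (n + 1)) ℝ) (αL : ℝ) (z : Fin n → ℝ) :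
    Matrix (Fin n) (Fin n) ℝ :=
  1 - ((1 : Matrix (Fin n) (Fin n) ℝ) - (1 - αL) • Matrix.diagonal z)
        * (PiMat L)ᵀ * Matrix.diagonal z

/-- `Δ_k = Δ(z⁽ᵏ⁾) = (I − (I − (1−α_L)Λ)Πᵀ Λ)⁻¹ (I − (1−α_x)Λ)`; for `k = 0` this is `I`. -/
def DeltaM {n : ℕ} (L : Matrix (Fin n) (Fin (n + 1)) ℝ) (αx αL : ℝ) (k : ℕ) :
    Matrix (Fin n) (Fin n) ℝ :=
  (Amat L αL (zvec n k))⁻¹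
    * ((1 : Matrix (Fin n) (Fin n) ℝ) - (1 - αx) • Matrix.diagonal (zvec n k))

/-- `δ_k = δ(z⁽ᵏ⁾) = (I − (I − (1−α_L)Λ)Πᵀ Λ)⁻¹ (I − (I − (1−α_L)Λ)Πᵀ) p̄`;
for `k = 0` this is `(I − Πᵀ) p̄`. -/
def deltaV {n : ℕ} (L : Matrix (Fin n) (Fin (n + 1)) ℝ) (αL : ℝ) (k : ℕ) :
    Fin n → ℝ :=
  (Amat L αL (zvec n k))⁻¹ *ᵥ
    ((((1 : Matrix (Fin n) (Fin n) ℝ)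
        - ((1 : Matrix (Fin n) (Fin n) ℝ) - (1 - αL) • Matrix.diagonal (zvec n k))
            * (PiMat L)ᵀ)) *ᵥ pbar L)

/-- The event `{q ∈ [q_{k+1}*, q_k*)}` (with `q_0* = ∞` and `q_{n+1}* = 0`). -/
def qEvent {Ω : Type} (q : Ω → ℝ) (qsE : ℕ → EReal) (k : ℕ) : Set Ω :=
  {ω | qsE (k + 1) ≤ (q ω : EReal) ∧ (q ω : EReal) < qsE k}

lemma relLiab_nonneg {n : ℕ} {L : Matrix (Fin n) (Fin (n + 1)) ℝ} (hL : ∀ i j, 0 ≤ L i j)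
    (i j : Fin n) : 0 ≤ relLiab L i j := by
  unfold relLiab
  split
  · exact div_nonneg (hL _ _) (le_of_lt ‹_›)
  · exact le_refl 0

lemma Amat_apply {n : ℕ} (L : Matrix (Fin n) (Fin (n + 1)) ℝ) (αL : ℝ) (z : Fin n → ℝ)
    (i j : Fin n) :
    Amat L αL z i j = (if i = j then 1 else 0) - (1 - (1 - αL) * z i) * relLiab L j i * z j := by
  have h1 : ((1 : Matrix (Fin n) (Fin n) ℝ) - (1 - αL) • Matrix.diagonal z)
      = Matrix.diagonal (fun i => 1 - (1 - αL) * z i) := by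
    ext a b
    by_cases h : a = b <;> simp [Matrix.one_apply, Matrix.diagonal, h]
  rw [Amat, h1]
  simp [Matrix.sub_apply, Matrix.mul_diagonal, Matrix.diagonal_mul, Matrix.one_apply, PiMat,
    Matrix.transpose_apply]

lemma zvec_cases (n k : ℕ) (i : Fin n) : zvec n k i = 0 ∨ zvec n k i = 1 := by
  unfold zvec; split <;> simp

lemma Amat_det_ne_zero {n : ℕ} {L : Matrix (Fin n) (Fin (n + 1)) ℝ}
    (hL : ∀ i j, 0 ≤ L i j) (hLdiag : ∀ i : Fin n, L i i.castSucc = 0)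
    {αL : ℝ} (hαL : αL ∈ Set.Icc (0:ℝ) 1)
    (hreg : ∀ i, 0 < pbar L i ∧ ∑ j, relLiab L i j < 1) (k : ℕ) :
    (Amat L αL (zvec n k)).det ≠ 0 := by
  apply det_ne_zero_of_sum_col_lt_diag
  intro j
  have hdiag : Amat L αL (zvec n k) j j = 1 := by
    rw [Amat_apply]
    simp [relLiab, hLdiag j]
  rw [hdiag]
  have hcbd : ∀ i : Fin n, 0 ≤ 1 - (1 - αL) * zvec n k i ∧ 1 - (1 - αL) * zvec n k i ≤ 1 := by
    intro i
    rcases zvec_cases n k i with h | h <;> rw [h] <;> constructor <;> nlinarith [hαL.1, hαL.2]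
  have hzbd : ∀ i : Fin n, 0 ≤ zvec n k i ∧ zvec n k i ≤ 1 := by
    intro i; rcases zvec_cases n k i with h | h <;> rw [h] <;> norm_num
  have hterm : ∀ i ∈ Finset.univ.erase j, ‖Amat L αL (zvec n k) i j‖ ≤ relLiab L j i := by
    intro i hi
    have hij : i ≠ j := (Finset.mem_erase.mp hi).1
    have hπ : 0 ≤ relLiab L j i := relLiab_nonneg hL j i
    rw [Amat_apply, if_neg hij, zero_sub, norm_neg, Real.norm_eq_abs, abs_of_nonneg
      (mul_nonneg (mul_nonneg (hcbd i).1 hπ) (hzbd j).1)]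
    have h1 : (1 - (1 - αL) * zvec n k i) * zvec n k j ≤ 1 := by
      nlinarith [(hcbd i).1, (hcbd i).2, (hzbd j).1, (hzbd j).2]
    nlinarith [mul_nonneg (sub_nonneg.mpr h1) hπ]
  rw [norm_one]
  calc ∑ i ∈ Finset.univ.erase j, ‖Amat L αL (zvec n k) i j‖
      ≤ ∑ i ∈ Finset.univ.erase j, relLiab L j i := Finset.sum_le_sum hterm
    _ ≤ ∑ i, relLiab L j i := Finset.sum_le_sum_of_subset_of_nonneg
        (Finset.erase_subset _ _) (fun i _ _ => relLiab_nonneg hL j i)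
    _ < 1 := (hreg j).2

lemma Bmat_apply {n : ℕ} (L : Matrix (Fin n) (Fin (n + 1)) ℝ) (αL : ℝ) (z : Fin n → ℝ)
    (i j : Fin n) :
    ((1 : Matrix (Fin n) (Fin n) ℝ)
        - ((1 : Matrix (Fin n) (Fin n) ℝ) - (1 - αL) • Matrix.diagonal z) * (PiMat L)ᵀ) i j
      = (if i = j then 1 else 0) - (1 - (1 - αL) * z i) * relLiab L j i := by
  have h1 : ((1 : Matrix (Fin n) (Fin n) ℝ) - (1 - αL) • Matrix.diagonal z)
      = Matrix.diagonal (fun i => 1 - (1 - αL) * z i) := by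
    ext a b
    by_cases h : a = b <;> simp [Matrix.one_apply, Matrix.diagonal, h]
  rw [h1]
  simp [Matrix.sub_apply, Matrix.diagonal_mul, Matrix.one_apply, PiMat, Matrix.transpose_apply]

lemma V_eq_linear {n : ℕ} {L : Matrix (Fin n) (Fin (n + 1)) ℝ}
    (hL : ∀ i j, 0 ≤ L i j) (hLdiag : ∀ i : Fin n, L i i.castSucc = 0)
    {αx αL : ℝ} (hαx : αx ∈ Set.Icc (0:ℝ) 1) (hαL : αL ∈ Set.Icc (0:ℝ) 1)
    (hreg : ∀ i, 0 < pbar L i ∧ ∑ j, relLiab L i j < 1)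
    (x V : Fin n → ℝ) (hx : ∀ i, 0 ≤ x i)
    (hfix : Psi L αx αL x V = V)
    (k : ℕ) (hpat : ∀ i : Fin n, (V i < 0 ↔ (i : ℕ) < k)) :
    ∀ i, V i = ∑ j, DeltaM L αx αL k i j * x j - deltaV L αL k i := by
  have hfixi : ∀ i, Psi L αx αL x V i = V i := fun i => congrFun hfix i
  have hsum_nonneg : ∀ i, 0 ≤ ∑ j, relLiab L j i * max (pbar L j - max (-(V j)) 0) 0 :=
    fun i => Finset.sum_nonneg fun j _ =>
      mul_nonneg (relLiab_nonneg hL j i) (le_max_right _ _)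
  have hVlb : ∀ i, -(pbar L i) ≤ V i := by
    intro i
    have h := hfixi i
    unfold Psi at h
    split at h
    · nlinarith [hx i, hsum_nonneg i]
    · nlinarith [mul_nonneg hαx.1 (hx i), mul_nonneg hαL.1 (hsum_nonneg i)]
  have hP : ∀ j, max (pbar L j - max (-(V j)) 0) 0 = pbar L j + zvec n k j * V j := by
    intro j
    by_cases h : (j : ℕ) < k
    · have hVj : V j < 0 := (hpat j).mpr h
      have hz : zvec n k j = 1 := by unfold zvec; rw [if_pos h]
      rw [hz, one_mul, max_eq_left (neg_nonneg.mpr hVj.le), sub_neg_eq_add,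
        max_eq_left (by linarith [hVlb j])]
    · have hVj : 0 ≤ V j := not_lt.mp (fun hc => h ((hpat j).mp hc))
      have hz : zvec n k j = 0 := by unfold zvec; rw [if_neg h]
      rw [hz, zero_mul, add_zero, max_eq_right (neg_nonpos.mpr hVj), sub_zero,
        max_eq_left (hreg j).1.le]
  have hkey : ∀ i, V i - (1 - (1 - αL) * zvec n k i) * ∑ j, relLiab L j i * (zvec n k j * V j)
      = (1 - (1 - αx) * zvec n k i) * x i
        - (pbar L i - (1 - (1 - αL) * zvec n k i) * ∑ j, relLiab L j i * pbar L j) := by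
    intro i
    have hf := hfixi i
    unfold Psi at hf
    simp only [hP] at hf
    rw [show (∑ j, relLiab L j i * (pbar L j + zvec n k j * V j))
        = (∑ j, relLiab L j i * pbar L j) + ∑ j, relLiab L j i * (zvec n k j * V j) by
      rw [← Finset.sum_add_distrib]; exact Finset.sum_congr rfl fun j _ => by ring] at hf
    by_cases h : (i : ℕ) < k
    · have hVi : V i < 0 := (hpat i).mpr h
      have hz : zvec n k i = 1 := by unfold zvec; rw [if_pos h]
      rw [if_neg (not_le.mpr hVi)] at hf
      rw [hz]
      linear_combination -hf
    · have hVi : 0 ≤ V i := not_lt.mp (fun hc => h ((hpat i).mp hc))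
      have hz : zvec n k i = 0 := by unfold zvec; rw [if_neg h]
      rw [if_pos hVi] at hf
      rw [hz]
      linear_combination -hf
  have hAv : ∀ i, (Amat L αL (zvec n k) *ᵥ V) i
      = V i - (1 - (1 - αL) * zvec n k i) * ∑ j, relLiab L j i * (zvec n k j * V j) := by
    intro i
    simp only [Matrix.mulVec, dotProduct]
    have hterm : ∀ j, Amat L αL (zvec n k) i j * V j
        = (if i = j then V j else 0)
          - (1 - (1 - αL) * zvec n k i) * (relLiab L j i * (zvec n k j * V j)) := by
      intro j; rw [Amat_apply]; split <;> ring
    rw [Finset.sum_congr rfl fun j _ => hterm j, Finset.sum_sub_distrib,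
      Finset.sum_ite_eq, if_pos (Finset.mem_univ i), ← Finset.mul_sum]
  have hb1 : ∀ i, (((1 : Matrix (Fin n) (Fin n) ℝ)
      - (1 - αx) • Matrix.diagonal (zvec n k)) *ᵥ x) i
      = (1 - (1 - αx) * zvec n k i) * x i := by
    intro i
    have h1 : ((1 : Matrix (Fin n) (Fin n) ℝ) - (1 - αx) • Matrix.diagonal (zvec n k))
        = Matrix.diagonal (fun i => 1 - (1 - αx) * zvec n k i) := by
      ext a b
      by_cases h : a = b <;> simp [Matrix.one_apply, Matrix.diagonal, h]
    rw [h1]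
    simp [Matrix.mulVec_diagonal]
  have hb2 : ∀ i, ((((1 : Matrix (Fin n) (Fin n) ℝ)
        - ((1 : Matrix (Fin n) (Fin n) ℝ) - (1 - αL) • Matrix.diagonal (zvec n k))
            * (PiMat L)ᵀ)) *ᵥ pbar L) i
      = pbar L i - (1 - (1 - αL) * zvec n k i) * ∑ j, relLiab L j i * pbar L j := by
    intro i
    simp only [Matrix.mulVec, dotProduct]
    have hterm : ∀ j, ((1 : Matrix (Fin n) (Fin n) ℝ)
        - ((1 : Matrix (Fin n) (Fin n) ℝ) - (1 - αL) • Matrix.diagonal (zvec n k))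
            * (PiMat L)ᵀ) i j * pbar L j
        = (if i = j then pbar L j else 0)
          - (1 - (1 - αL) * zvec n k i) * (relLiab L j i * pbar L j) := by
      intro j; rw [Bmat_apply]; split <;> ring
    rw [Finset.sum_congr rfl fun j _ => hterm j, Finset.sum_sub_distrib,
      Finset.sum_ite_eq, if_pos (Finset.mem_univ i), ← Finset.mul_sum]
  have hdet := Amat_det_ne_zero hL hLdiag hαL hreg k
  have hinv : (Amat L αL (zvec n k))⁻¹ * Amat L αL (zvec n k) = 1 :=
    Matrix.nonsing_inv_mul _ (Ne.isUnit hdet)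
  have hVrec : V = (Amat L αL (zvec n k))⁻¹ *ᵥ (Amat L αL (zvec n k) *ᵥ V) := by
    rw [Matrix.mulVec_mulVec, hinv, Matrix.one_mulVec]
  have hbv : Amat L αL (zvec n k) *ᵥ V
      = (((1 : Matrix (Fin n) (Fin n) ℝ) - (1 - αx) • Matrix.diagonal (zvec n k)) *ᵥ x)
        - ((((1 : Matrix (Fin n) (Fin n) ℝ)
        - ((1 : Matrix (Fin n) (Fin n) ℝ) - (1 - αL) • Matrix.diagonal (zvec n k))
            * (PiMat L)ᵀ)) *ᵥ pbar L) := by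
    funext i
    rw [Pi.sub_apply, hAv i, hb1 i, hb2 i, hkey i]
  intro i
  calc V i = ((Amat L αL (zvec n k))⁻¹ *ᵥ (Amat L αL (zvec n k) *ᵥ V)) i :=
        congrFun hVrec i
    _ = ((Amat L αL (zvec n k))⁻¹ *ᵥ _) i := by rw [hbv]
    _ = (DeltaM L αx αL k *ᵥ x) i - deltaV L αL k i := by
        rw [Matrix.mulVec_sub, Pi.sub_apply, DeltaM, ← Matrix.mulVec_mulVec, deltaV]
    _ = ∑ j, DeltaM L αx αL k i j * x j - deltaV L αL k i := by
        simp [Matrix.mulVec, dotProduct]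

/-- Under the regularity assumption with comonotonic endowments `X = f(q)` and ordered solvency
thresholds `∞ = q_0* ≥ q_1* ≥ ... ≥ q_n* ≥ q_{n+1}* = 0`, the expected wealth, expected
payment, and expected equity of each bank `i` are given by partial sums of
`Δ_k 𝔼[f(q) 1_{q ∈ [q_{k+1}*, q_k*)}] − δ_k ℙ(q ∈ [q_{k+1}*, q_k*))`. -/
theorem expectations_comonotonic (n : ℕ) (hn : 1 ≤ n)
    (L : Matrix (Fin n) (Fin (n + 1)) ℝ)
    (hL : ∀ i j, 0 ≤ L i j) (hLdiag : ∀ i : Fin n, L i i.castSucc = 0)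
    (αx αL : ℝ) (hαx : αx ∈ Set.Icc (0 : ℝ) 1) (hαL : αL ∈ Set.Icc (0 : ℝ) 1)
    (hreg : ∀ i, 0 < pbar L i ∧ ∑ j, relLiab L i j < 1)
    (Vmap : (Fin n → ℝ) → (Fin n → ℝ))
    (hV : ∀ x : Fin n → ℝ, (∀ i, 0 ≤ x i) →
      IsGreatest {V | Psi L αx αL x V = V} (Vmap x))
    (Ω : Type) (mΩ : MeasurableSpace Ω) (ℙ : Measure Ω) (hprob : IsProbabilityMeasure ℙ)
    (q : Ω → ℝ) (hqm : Measurable q) (hqpos : ∀ ω, 0 ≤ q ω)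
    (f : ℝ → Fin n → ℝ)
    (hfmono : ∀ u v : ℝ, 0 ≤ u → u ≤ v → f u ≤ f v)
    (hfpos : ∀ u : ℝ, 0 ≤ u → ∀ i, 0 ≤ f u i)
    (hfint : ∀ i, Integrable (fun ω => f (q ω) i) ℙ)
    (qstar : Fin n → ℝ)
    (hqstar : ∀ i, qstar i = sInf {q' : ℝ | 0 ≤ q' ∧ 0 ≤ Vmap (f q') i})
    (qsE : ℕ → EReal)
    (hqs0 : qsE 0 = ⊤) (hqslast : qsE (n + 1) = 0)
    (hqsval : ∀ i : Fin n, qsE ((i : ℕ) + 1) = ((qstar i : ℝ) : EReal))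
    (hqsmono : ∀ k, k ≤ n → qsE (k + 1) ≤ qsE k)
    (hchar : ∀ i : Fin n, ∀ q' : ℝ, 0 ≤ q' →
      (Vmap (f q') i < 0 ↔ ((q' : EReal) < qsE ((i : ℕ) + 1)))) :
    ∀ i : Fin n,
      (∫ ω, Vmap (f (q ω)) i ∂ℙ
        = ∑ k ∈ Finset.range (n + 1),
            ((∑ j, DeltaM L αx αL k i j * ∫ ω in qEvent q qsE k, f (q ω) j ∂ℙ)
              - deltaV L αL k i * (ℙ (qEvent q qsE k)).toReal))
      ∧ (∫ ω, (pbar L i - max (-(Vmap (f (q ω)) i)) 0) ∂ℙ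
        = pbar L i + ∑ k ∈ Finset.Icc ((i : ℕ) + 1) n,
            ((∑ j, DeltaM L αx αL k i j * ∫ ω in qEvent q qsE k, f (q ω) j ∂ℙ)
              - deltaV L αL k i * (ℙ (qEvent q qsE k)).toReal))
      ∧ (∫ ω, max (Vmap (f (q ω)) i) 0 ∂ℙ
        = ∑ k ∈ Finset.range ((i : ℕ) + 1),
            ((∑ j, DeltaM L αx αL k i j * ∫ ω in qEvent q qsE k, f (q ω) j ∂ℙ)
              - deltaV L αL k i * (ℙ (qEvent q qsE k)).toReal)) := by
  classical
  -- antitonicity of qsE on [0, n+1]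
  have hqsaux : ∀ b : ℕ, b ≤ n + 1 → ∀ a, a ≤ b → qsE b ≤ qsE a := by
    intro b
    induction b with
    | zero => intro _ a ha; rw [Nat.le_zero.mp ha]
    | succ m ih =>
      intro hb a ha
      rcases Nat.eq_or_lt_of_le ha with h | h
      · rw [h]
      · exact le_trans (hqsmono m (by omega)) (ih (by omega) a (by omega))
  have hqsmono' : ∀ a b : ℕ, a ≤ b → b ≤ n + 1 → qsE b ≤ qsE a :=
    fun a b hab hb => hqsaux b hb a hab
  -- every ω belongs to some event with index ≤ n
  have hex : ∀ ω, ∃ k, k ≤ n ∧ ω ∈ qEvent q qsE k := by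
    intro ω
    have hPn : qsE (n + 1) ≤ ((q ω : ℝ) : EReal) := by
      rw [hqslast]
      exact_mod_cast EReal.coe_le_coe_iff.mpr (hqpos ω)
    have hEx : ∃ m, qsE (m + 1) ≤ ((q ω : ℝ) : EReal) := ⟨n, hPn⟩
    refine ⟨Nat.find hEx, ?_, Nat.find_spec hEx, ?_⟩
    · exact Nat.find_le hPn
    · rcases Nat.eq_zero_or_pos (Nat.find hEx) with h0 | hpos
      · rw [h0, hqs0]; exact EReal.coe_lt_top _
      · obtain ⟨m, hm⟩ := Nat.exists_eq_succ_of_ne_zero (Nat.pos_iff_ne_zero.mp hpos)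
        rw [hm]
        have := Nat.find_min hEx (m := m) (by omega)
        exact not_le.mp this
  -- uniqueness
  have huniq : ∀ ω k l, k ≤ n → l ≤ n →
      ω ∈ qEvent q qsE k → ω ∈ qEvent q qsE l → k = l := by
    intro ω k l hk hl hK hL'
    by_contra hne
    rcases Nat.lt_or_ge k l with h | h
    · exact absurd (lt_of_lt_of_le hL'.2 (le_trans (hqsmono' (k+1) l h (by omega)) hK.1))
        (lt_irrefl _)
    · have h' : l < k := by omega
      exact absurd (lt_of_lt_of_le hK.2 (le_trans (hqsmono' (l+1) k h' (by omega)) hL'.1))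
        (lt_irrefl _)
  -- default pattern on each event
  have hpattern : ∀ ω k, k ≤ n → ω ∈ qEvent q qsE k →
      ∀ i : Fin n, (Vmap (f (q ω)) i < 0 ↔ (i : ℕ) < k) := by
    intro ω k hk hmem i
    rw [hchar i (q ω) (hqpos ω)]
    constructor
    · intro hlt
      by_contra hc
      push_neg at hc
      exact absurd (lt_of_lt_of_le hlt (le_trans (hqsmono' (k+1) ((i:ℕ)+1) (by omega)
        (by omega)) hmem.1)) (lt_irrefl _)
    · intro hlt
      exact lt_of_lt_of_le hmem.2 (hqsmono' ((i:ℕ)+1) k (by omega) (by omega))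
  -- pointwise value on each event
  have hval : ∀ ω k, k ≤ n → ω ∈ qEvent q qsE k → ∀ i : Fin n,
      Vmap (f (q ω)) i = ∑ j, DeltaM L αx αL k i j * f (q ω) j - deltaV L αL k i := by
    intro ω k hk hmem i
    exact V_eq_linear hL hLdiag hαx hαL hreg (f (q ω)) (Vmap (f (q ω)))
      (hfpos (q ω) (hqpos ω))
      ((hV (f (q ω)) (hfpos (q ω) (hqpos ω))).1)
      k (hpattern ω k hk hmem) i
  -- measurability of events
  have hEmeas : ∀ k, MeasurableSet (qEvent q qsE k) := by
    intro k
    have heq : qEvent q qsE k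
        = (fun ω => ((q ω : ℝ) : EReal)) ⁻¹' (Set.Ici (qsE (k+1)) ∩ Set.Iio (qsE k)) := by
      ext ω; simp [qEvent, Set.mem_setOf_eq, Set.mem_Ici, Set.mem_Iio]
    rw [heq]
    exact (measurable_coe_real_ereal.comp hqm) (measurableSet_Ici.inter measurableSet_Iio)
  -- integrability of the linear pieces
  have hgint : ∀ (k : ℕ) (i : Fin n),
      Integrable (fun ω => ∑ j, DeltaM L αx αL k i j * f (q ω) j - deltaV L αL k i) ℙ := by
    intro k i
    exact (integrable_finset_sum _ fun j _ => (hfint j).const_mul _).sub (integrable_const _)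
  -- splitting the set integral
  have hsplit : ∀ (k : ℕ) (i : Fin n),
      ∫ ω in qEvent q qsE k, (∑ j, DeltaM L αx αL k i j * f (q ω) j - deltaV L αL k i) ∂ℙ
      = (∑ j, DeltaM L αx αL k i j * ∫ ω in qEvent q qsE k, f (q ω) j ∂ℙ)
        - deltaV L αL k i * (ℙ (qEvent q qsE k)).toReal := by
    intro k i
    rw [integral_sub ((integrable_finset_sum _ fun j _ => (hfint j).const_mul _).integrableOn)
      ((integrable_const _).integrableOn)]
    rw [integral_finset_sum _ fun j _ => ((hfint j).const_mul _).integrableOn]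
    rw [setIntegral_const, smul_eq_mul, mul_comm]
    congr 1
    exact Finset.sum_congr rfl fun j _ => integral_const_mul _ _
  intro i
  refine ⟨?_, ?_, ?_⟩
  · -- expected wealth
    have hpt : (fun ω => Vmap (f (q ω)) i)
        = fun ω => ∑ k ∈ Finset.range (n + 1),
            (qEvent q qsE k).indicator
              (fun ω => ∑ j, DeltaM L αx αL k i j * f (q ω) j - deltaV L αL k i) ω := by
      funext ω
      obtain ⟨k₀, hk₀, hmem⟩ := hex ω
      rw [Finset.sum_eq_single k₀
        (fun b hb hbne => Set.indicator_of_notMem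
          (fun hc => hbne (huniq ω b k₀ (by simp at hb; omega) hk₀ hc hmem)) _)
        (fun hc => absurd (Finset.mem_range.mpr (by omega)) hc)]
      rw [Set.indicator_of_mem hmem]
      exact hval ω k₀ hk₀ hmem i
    rw [hpt, integral_finset_sum _ fun k _ => (hgint k i).indicator (hEmeas k)]
    exact Finset.sum_congr rfl fun k _ => by
      rw [integral_indicator (hEmeas k), hsplit k i]
  · -- expected payment
    have hpt : (fun ω => pbar L i - max (-(Vmap (f (q ω)) i)) 0)
        = fun ω => pbar L i + ∑ k ∈ Finset.Icc ((i : ℕ) + 1) n,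
            (qEvent q qsE k).indicator
              (fun ω => ∑ j, DeltaM L αx αL k i j * f (q ω) j - deltaV L αL k i) ω := by
      funext ω
      obtain ⟨k₀, hk₀, hmem⟩ := hex ω
      by_cases hdef : (i : ℕ) < k₀
      · -- bank i defaults
        have hVi : Vmap (f (q ω)) i < 0 := (hpattern ω k₀ hk₀ hmem i).mpr hdef
        rw [Finset.sum_eq_single k₀
          (fun b hb hbne => Set.indicator_of_notMem
            (fun hc => hbne (huniq ω b k₀ (by simp [Finset.mem_Icc] at hb; omega) hk₀ hc hmem)) _)
          (fun hc => absurd (Finset.mem_Icc.mpr (by omega)) hc)]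
        rw [Set.indicator_of_mem hmem, ← hval ω k₀ hk₀ hmem i,
          max_eq_left (neg_nonneg.mpr hVi.le)]
        ring
      · -- bank i solvent
        have hVi : ¬ (Vmap (f (q ω)) i < 0) := fun hc => hdef ((hpattern ω k₀ hk₀ hmem i).mp hc)
        push_neg at hVi
        rw [Finset.sum_eq_zero (fun b hb => Set.indicator_of_notMem
          (fun hc => absurd (huniq ω b k₀ (by simp [Finset.mem_Icc] at hb; omega) hk₀ hc hmem)
            (by simp [Finset.mem_Icc] at hb; omega)) _)]
        rw [max_eq_right (neg_nonpos.mpr hVi)]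
        ring
    rw [hpt, integral_add (integrable_const _)
      (integrable_finset_sum _ fun k _ => (hgint k i).indicator (hEmeas k)),
      integral_const]
    simp only [probReal_univ, one_smul]
    congr 1
    rw [integral_finset_sum _ fun k _ => (hgint k i).indicator (hEmeas k)]
    exact Finset.sum_congr rfl fun k _ => by
      rw [integral_indicator (hEmeas k), hsplit k i]
  · -- expected equity
    have hpt : (fun ω => max (Vmap (f (q ω)) i) 0)
        = fun ω => ∑ k ∈ Finset.range ((i : ℕ) + 1),
            (qEvent q qsE k).indicator
              (fun ω => ∑ j, DeltaM L αx αL k i j * f (q ω) j - deltaV L αL k i) ω := by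
      funext ω
      obtain ⟨k₀, hk₀, hmem⟩ := hex ω
      by_cases hdef : (i : ℕ) < k₀
      · -- defaults: equity 0, k₀ outside range (i+1)
        have hVi : Vmap (f (q ω)) i < 0 := (hpattern ω k₀ hk₀ hmem i).mpr hdef
        rw [Finset.sum_eq_zero (fun b hb => Set.indicator_of_notMem
          (fun hc => absurd (huniq ω b k₀ (by simp at hb; omega) hk₀ hc hmem)
            (by simp at hb; omega)) _)]
        exact max_eq_right hVi.le
      · have hVi : ¬ (Vmap (f (q ω)) i < 0) := fun hc => hdef ((hpattern ω k₀ hk₀ hmem i).mp hc)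
        push_neg at hVi
        rw [Finset.sum_eq_single k₀
          (fun b hb hbne => Set.indicator_of_notMem
            (fun hc => hbne (huniq ω b k₀ (by simp at hb; omega) hk₀ hc hmem)) _)
          (fun hc => absurd (Finset.mem_range.mpr (by omega)) hc)]
        rw [Set.indicator_of_mem hmem, ← hval ω k₀ hk₀ hmem i]
        exact max_eq_left hVi
    rw [hpt, integral_finset_sum _ fun k _ => (hgint k i).indicator (hEmeas k)]
    exact Finset.sum_congr rfl fun k _ => by
      rw [integral_indicator (hEmeas k), hsplit k i]
end
end

section
/- Consider the two-bank network with societal node given by liabilities L_{12} = 1, L_{13} = 1, L_{21} = 1, L_{23} = 2 (so p̄ = (2,3), π_{12} = 1/2, π_{21} = 1/3) and recovery rates α_x, α_L ∈ [0,1]. Then the greatest clearing payments for the four endowment vectors are: p((0,0)) = (0,0); p((0,2)) = (4α_x α_L/(6 − α_L²), 12α_x/(6 − α_L²)); p((1,0)) = (6α_x/(6 − α_L²), 3α_x α_L/(6 − α_L²)); and p((1,2)) = (2,3). Consequently, for the countermonotonic random endowment X taking values (0,2) and (1,0) each with probability 1/2 and the comonotonic random endowment Z taking values (0,0) and (1,2)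 each with probability 1/2, one has 𝔼[p(X)] = (α_x(2α_L + 3)/(6 − α_L²), 3α_x(α_L + 4)/(2(6 − α_L²))) and 𝔼[p(Z)] = (1, 3/2), with 𝔼[p_i(X)] < 𝔼[p_i(Z)] for both banks i whenever min{α_x, α_L} < 1; hence the comonotonic lower bound on expected payments fails in the presence of bankruptcy costs. -/
open Matrix BigOperators MeasureTheory

noncomputable section

/-- Total liabilities `p̄ = (2, 3)` for the two-bank network with `L₁₂ = 1`, `L₁₃ = 1`,
`L₂₁ = 1`, `L₂₃ = 2`. -/
def pbar2 : Fin 2 → ℝ := ![2, 3]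

/-- Relative liabilities `π₁₂ = 1/2`, `π₂₁ = 1/3`. -/
def Pi2 : Matrix (Fin 2) (Fin 2) ℝ := !![0, 1/2; 1/3, 0]

/-- The clearing map in wealths `Ψ_x` for the two-bank network. -/
def Psi2 (αx αL : ℝ) (x V : Fin 2 → ℝ) (i : Fin 2) : ℝ :=
  if 0 ≤ V i then
    x i + ∑ j, Pi2 j i * max (pbar2 j - max (-(V j)) 0) 0 - pbar2 i
  else
    αx * x i + αL * ∑ j, Pi2 j i * max (pbar2 j - max (-(V j)) 0) 0 - pbar2 i

/-- The clearing payments `p(x) = p̄ − V(x)⁻`. -/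
def pay2 (Vmap : (Fin 2 → ℝ) → (Fin 2 → ℝ)) (x : Fin 2 → ℝ) : Fin 2 → ℝ :=
  fun i => pbar2 i - max (-(Vmap x i)) 0

lemma Psi2_apply0 (αx αL : ℝ) (x V : Fin 2 → ℝ) : Psi2 αx αL x V 0 =
    if 0 ≤ V 0 then x 0 + 1/3 * max (3 - max (-(V 1)) 0) 0 - 2
    else αx * x 0 + αL * (1/3 * max (3 - max (-(V 1)) 0) 0) - 2 := by
  simp [Psi2, Pi2, pbar2, Fin.sum_univ_two]

lemma Psi2_apply1 (αx αL : ℝ) (x V : Fin 2 → ℝ) : Psi2 αx αL x V 1 =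
    if 0 ≤ V 1 then x 1 + 1/2 * max (2 - max (-(V 0)) 0) 0 - 3
    else αx * x 1 + αL * (1/2 * max (2 - max (-(V 0)) 0) 0) - 3 := by
  simp [Psi2, Pi2, pbar2, Fin.sum_univ_two]

-- two-point integral helper
lemma integral_two_point {Ω : Type} [MeasurableSpace Ω] (μ : Measure Ω)
    [IsProbabilityMeasure μ]
    (X : Ω → Fin 2 → ℝ) (hX : Measurable X) (v w : Fin 2 → ℝ) (hvw : v ≠ w)
    (hA : μ {ω | X ω = v} = 1/2) (hB : μ {ω | X ω = w} = 1/2)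
    (f : (Fin 2 → ℝ) → ℝ) :
    ∫ ω, f (X ω) ∂μ = (f v + f w) / 2 := by
  set A := {ω | X ω = v} with hAdef
  set B := {ω | X ω = w} with hBdef
  have hAm : MeasurableSet A := hX (measurableSet_singleton v)
  have hBm : MeasurableSet B := hX (measurableSet_singleton w)
  have hdisj : Disjoint A B := by
    rw [Set.disjoint_left]
    intro ω hω hω'
    exact hvw (hω.symm.trans hω')
  have hunion : μ (A ∪ B) = 1 := by
    rw [measure_union hdisj hBm, hA, hB, ENNReal.add_halves]
  have hcompl : μ (A ∪ B)ᶜ = 0 := by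
    rw [prob_compl_eq_zero_iff (hAm.union hBm)]
    exact hunion
  have hmem : A ∪ B ∈ ae μ := by rw [mem_ae_iff]; exact hcompl
  have heq : (fun ω => f (X ω)) =ᵐ[μ]
      (fun ω => A.indicator (fun _ => f v) ω + B.indicator (fun _ => f w) ω) := by
    refine Filter.eventuallyEq_of_mem hmem ?_
    intro ω hω
    rcases hω with hω | hω
    · have hnB : ω ∉ B := Set.disjoint_left.mp hdisj hω
      simp only [Set.indicator_of_mem hω, Set.indicator_of_notMem hnB, add_zero]
      rw [hω]
    · have hnA : ω ∉ A := Set.disjoint_right.mp hdisj hω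
      simp only [Set.indicator_of_mem hω, Set.indicator_of_notMem hnA, zero_add]
      rw [hω]
  rw [integral_congr_ae heq, integral_add
      ((integrable_const (f v)).indicator hAm) ((integrable_const (f w)).indicator hBm),
    integral_indicator_const _ hAm, integral_indicator_const _ hBm, measureReal_def, measureReal_def, hA, hB]
  norm_num [ENNReal.toReal_div]
  ring

lemma default_V (αx αL a b : ℝ) (hx0 : 0 ≤ αx) (hx1 : αx ≤ 1)
    (hL0 : 0 ≤ αL) (hL1 : αL ≤ 1)
    (ha0 : 0 ≤ a) (ha1 : a ≤ 1) (hb0 : 0 ≤ b) (hb1 : b ≤ 2) (hab : a < 1 ∨ b < 2)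
    (V : Fin 2 → ℝ) (hfix : Psi2 αx αL ![a, b] V = V) :
    V 0 = (6*αx*a + 2*αx*αL*b) / (6 - αL^2) - 2
      ∧ V 1 = (6*αx*b + 3*αx*αL*a) / (6 - αL^2) - 3 := by
  have hD : (0:ℝ) < 6 - αL^2 := by nlinarith
  have e0 := congrFun hfix 0
  have e1 := congrFun hfix 1
  rw [Psi2_apply0] at e0
  rw [Psi2_apply1] at e1
  simp only [Matrix.cons_val_zero, Matrix.cons_val_one, Matrix.head_cons] at e0 e1
  have hV1 : V 1 < 0 := by
    by_contra h
    push_neg at h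
    rw [if_pos h] at e1
    have hm1 : max (-(V 1)) 0 = 0 := max_eq_right (by linarith)
    rcases le_or_gt 0 (V 0) with h0 | h0
    · rw [if_pos h0] at e0
      have hm0 : max (-(V 0)) 0 = 0 := max_eq_right (by linarith)
      rw [hm0] at e1
      rw [hm1] at e0
      norm_num at e0 e1
      rcases hab with hc | hc <;> linarith
    · rw [if_neg (not_le.mpr h0)] at e0
      rw [hm1] at e0
      norm_num at e0
      have hm0 : max (-(V 0)) 0 = -(V 0) := max_eq_left (by linarith)
      rw [hm0] at e1
      have h2 : max (2 - -(V 0)) 0 = 2 + V 0 := by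
        rw [max_eq_left (by nlinarith : (0:ℝ) ≤ 2 - -(V 0))]; ring
      rw [h2] at e1
      rcases hab with hc | hc <;> nlinarith
  have hV0 : V 0 < 0 := by
    by_contra h
    push_neg at h
    rw [if_pos h] at e0
    rw [if_neg (not_le.mpr hV1)] at e1
    have hm0 : max (-(V 0)) 0 = 0 := max_eq_right (by linarith)
    rw [hm0] at e1
    norm_num at e1
    have hm1 : max (-(V 1)) 0 = -(V 1) := max_eq_left (by linarith)
    rw [hm1] at e0
    have h3 : max (3 - -(V 1)) 0 = 3 + V 1 := by
      rw [max_eq_left (by nlinarith : (0:ℝ) ≤ 3 - -(V 1))]; ring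
    rw [h3] at e0
    rcases hab with hc | hc <;> nlinarith
  rw [if_neg (not_le.mpr hV0)] at e0
  rw [if_neg (not_le.mpr hV1)] at e1
  rw [max_eq_left (by linarith : (0:ℝ) ≤ -(V 1))] at e0
  rw [max_eq_left (by linarith : (0:ℝ) ≤ -(V 0))] at e1
  rw [show (3:ℝ) - -(V 1) = 3 + V 1 by ring] at e0
  rw [show (2:ℝ) - -(V 0) = 2 + V 0 by ring] at e1
  have hkey : ∀ v n c : ℝ, (v + c) * (6 - αL^2) = n → v = n / (6 - αL^2) - c := by
    intro v n c h
    rw [eq_sub_iff_add_eq, eq_div_iff (ne_of_gt hD)]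
    linarith
  rcases le_or_gt (3 + V 1) 0 with hc1 | hc1 <;>
    rcases le_or_gt (2 + V 0) 0 with hc0 | hc0
  · rw [max_eq_right hc1] at e0
    rw [max_eq_right hc0] at e1
    have hA : αx * a = 0 := le_antisymm (by nlinarith) (mul_nonneg hx0 ha0)
    have hB : αx * b = 0 := le_antisymm (by nlinarith) (mul_nonneg hx0 hb0)
    constructor
    · exact hkey _ _ _ (by
        linear_combination (-(6-αL^2))*e0 + (-αL^2)*hA + (-2*αL)*hB)
    · exact hkey _ _ _ (by
        linear_combination (-(6-αL^2))*e1 + (-αL^2)*hB + (-3*αL)*hA)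
  · rw [max_eq_right hc1] at e0
    rw [max_eq_left (le_of_lt hc0)] at e1
    have hB : αx * b = 0 := le_antisymm (by nlinarith) (mul_nonneg hx0 hb0)
    have hLA : αL * (αx * a) = 0 := le_antisymm (by nlinarith)
      (mul_nonneg hL0 (mul_nonneg hx0 ha0))
    constructor
    · exact hkey _ _ _ (by
        linear_combination (-(6-αL^2))*e0 + (-αL)*hLA + (-2*αL)*hB)
    · exact hkey _ _ _ (by
        linear_combination (-(6-αL^2))*e1 + (-(6-αL^2)*αL/2)*e0 + (-αL^2)*hB + (-αL^2/2)*hLA)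
  · rw [max_eq_left (le_of_lt hc1)] at e0
    rw [max_eq_right hc0] at e1
    have hA : αx * a = 0 := le_antisymm (by nlinarith) (mul_nonneg hx0 ha0)
    have hLB : αL * (αx * b) = 0 := le_antisymm (by nlinarith)
      (mul_nonneg hL0 (mul_nonneg hx0 hb0))
    constructor
    · exact hkey _ _ _ (by
        linear_combination (-(6-αL^2))*e0 + (-(6-αL^2)*αL/3)*e1 + (-αL^2)*hA + (-αL^2/3)*hLB)
    · exact hkey _ _ _ (by
        linear_combination (-(6-αL^2))*e1 + (-αL)*hLB + (-3*αL)*hA)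
  · rw [max_eq_left (le_of_lt hc1)] at e0
    rw [max_eq_left (le_of_lt hc0)] at e1
    constructor
    · exact hkey _ _ _ (by linear_combination (-6:ℝ)*e0 - 2*αL*e1)
    · exact hkey _ _ _ (by linear_combination (-3*αL)*e0 - 6*e1)

-- x = (1,2): greatest fixed point is 0
lemma full_V (αx αL : ℝ) (hx0 : 0 ≤ αx) (hx1 : αx ≤ 1) (hL0 : 0 ≤ αL) (hL1 : αL ≤ 1)
    (W : Fin 2 → ℝ)
    (hg : IsGreatest {V : Fin 2 → ℝ | Psi2 αx αL ![1, 2] V = V} W) :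
    W = fun _ => 0 := by
  have hzero : Psi2 αx αL ![1, 2] (fun _ => 0) = fun _ => 0 := by
    funext i
    fin_cases i
    · show Psi2 αx αL ![1, 2] (fun _ => 0) 0 = 0
      rw [Psi2_apply0]; norm_num
    · show Psi2 αx αL ![1, 2] (fun _ => 0) 1 = 0
      rw [Psi2_apply1]; norm_num
  have hle : W ≤ fun _ => 0 := by
    have e0 := congrFun hg.1 0
    have e1 := congrFun hg.1 1
    rw [Psi2_apply0] at e0
    rw [Psi2_apply1] at e1
    simp only [Matrix.cons_val_zero, Matrix.cons_val_one, Matrix.head_cons] at e0 e1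
    intro i
    have hb0 : max (3 - max (-(W 1)) 0) 0 ≤ 3 :=
      max_le (by linarith [le_max_right (-(W 1)) (0:ℝ)]) (by norm_num)
    have hb1 : max (2 - max (-(W 0)) 0) 0 ≤ 2 :=
      max_le (by linarith [le_max_right (-(W 0)) (0:ℝ)]) (by norm_num)
    fin_cases i
    · show W 0 ≤ 0
      rcases le_or_gt 0 (W 0) with h | h
      · rw [if_pos h] at e0; linarith
      · linarith
    · show W 1 ≤ 0
      rcases le_or_gt 0 (W 1) with h | h
      · rw [if_pos h] at e1; linarith
      · linarith
  exact le_antisymm hle (hg.2 hzero)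

/-- In the two-bank network with societal node (`p̄ = (2,3)`, `π₁₂ = 1/2`, `π₂₁ = 1/3`) and
recovery rates `α_x, α_L ∈ [0,1]`, the greatest clearing payments at the four endowment
vectors are as displayed; consequently for the countermonotonic endowment `X` (values `(0,2)`
and `(1,0)` each with probability `1/2`) and the comonotonic endowment `Z` (values `(0,0)` and
`(1,2)` each with probability `1/2`) one has
`𝔼[p(X)] = (α_x(2α_L+3)/(6−α_L²), 3α_x(α_L+4)/(2(6−α_L²)))`, `𝔼[p(Z)] = (1, 3/2)`, and
`𝔼[p_i(X)] < 𝔼[p_i(Z)]` for both banks whenever `min{α_x, α_L} < 1`: the comonotonic lower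
bound on expected payments fails in the presence of bankruptcy costs. -/
theorem two_bank_counterexample (αx αL : ℝ)
    (hαx : αx ∈ Set.Icc (0 : ℝ) 1) (hαL : αL ∈ Set.Icc (0 : ℝ) 1)
    (Vmap : (Fin 2 → ℝ) → (Fin 2 → ℝ))
    (hV : ∀ x : Fin 2 → ℝ, (∀ i, 0 ≤ x i) →
      IsGreatest {V | Psi2 αx αL x V = V} (Vmap x)) :
    pay2 Vmap ![0, 0] = ![0, 0]
    ∧ pay2 Vmap ![0, 2] = ![4 * αx * αL / (6 - αL ^ 2), 12 * αx / (6 - αL ^ 2)]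
    ∧ pay2 Vmap ![1, 0] = ![6 * αx / (6 - αL ^ 2), 3 * αx * αL / (6 - αL ^ 2)]
    ∧ pay2 Vmap ![1, 2] = ![2, 3]
    ∧ (∀ (Ω : Type) (mΩ : MeasurableSpace Ω) (μ : Measure Ω),
        IsProbabilityMeasure μ →
        ∀ X Z : Ω → Fin 2 → ℝ, Measurable X → Measurable Z →
          μ {ω | X ω = ![0, 2]} = 1 / 2 → μ {ω | X ω = ![1, 0]} = 1 / 2 →
          μ {ω | Z ω = ![0, 0]} = 1 / 2 → μ {ω | Z ω = ![1, 2]} = 1 / 2 →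
          ((∀ i, ∫ ω, pay2 Vmap (X ω) i ∂μ
              = ![αx * (2 * αL + 3) / (6 - αL ^ 2),
                  3 * αx * (αL + 4) / (2 * (6 - αL ^ 2))] i)
            ∧ (∀ i, ∫ ω, pay2 Vmap (Z ω) i ∂μ = ![1, 3 / 2] i)
            ∧ (min αx αL < 1 → ∀ i,
                ∫ ω, pay2 Vmap (X ω) i ∂μ < ∫ ω, pay2 Vmap (Z ω) i ∂μ))) := by
  obtain ⟨hαx0, hαx1⟩ := hαx
  obtain ⟨hαL0, hαL1⟩ := hαL
  have hD : (0:ℝ) < 6 - αL^2 := by nlinarith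
  -- generic payment formula in the default regime
  have key : ∀ a b : ℝ, 0 ≤ a → a ≤ 1 → 0 ≤ b → b ≤ 2 → (a < 1 ∨ b < 2) →
      pay2 Vmap ![a, b]
        = ![(6*αx*a + 2*αx*αL*b) / (6 - αL^2), (6*αx*b + 3*αx*αL*a) / (6 - αL^2)] := by
    intro a b ha0 ha1 hb0 hb1 hab
    have hx : ∀ i, 0 ≤ (![a, b] : Fin 2 → ℝ) i := by
      intro i
      fin_cases i <;> simpa
    obtain ⟨h0, h1⟩ := default_V αx αL a b hαx0 hαx1 hαL0 hαL1 ha0 ha1 hb0 hb1 hab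
      (Vmap ![a, b]) (hV _ hx).1
    have hq1 : αx * a ≤ 1 := mul_le_one₀ hαx1 ha0 ha1
    have hq2 : αx * αL * b ≤ b := mul_le_of_le_one_left hb0 (mul_le_one₀ hαx1 hαL0 hαL1)
    have hq3 : αL ^ 2 ≤ 1 := by nlinarith
    have hq4 : αx * b ≤ b := mul_le_of_le_one_left hb0 hαx1
    have hq5 : αx * αL * a ≤ 1 := mul_le_one₀ (mul_le_one₀ hαx1 hαL0 hαL1) ha0 ha1
    have hn0 : (6*αx*a + 2*αx*αL*b) / (6 - αL^2) ≤ 2 := by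
      rw [div_le_iff₀ hD]; nlinarith
    have hn1 : (6*αx*b + 3*αx*αL*a) / (6 - αL^2) ≤ 3 := by
      rw [div_le_iff₀ hD]; nlinarith
    funext i
    fin_cases i
    · show pbar2 0 - max (-(Vmap ![a, b] 0)) 0 = _
      rw [h0, max_eq_left (by linarith : (0:ℝ) ≤ -((6*αx*a + 2*αx*αL*b) / (6 - αL^2) - 2))]
      simp only [pbar2, Fin.mk_zero, Fin.mk_one, Fin.isValue, Matrix.cons_val_zero, Matrix.cons_val_one, Matrix.head_cons]
      ring
    · show pbar2 1 - max (-(Vmap ![a, b] 1)) 0 = _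
      rw [h1, max_eq_left (by linarith : (0:ℝ) ≤ -((6*αx*b + 3*αx*αL*a) / (6 - αL^2) - 3))]
      simp only [pbar2, Fin.mk_zero, Fin.mk_one, Fin.isValue, Matrix.cons_val_zero, Matrix.cons_val_one, Matrix.head_cons]
      ring
  have h00 : pay2 Vmap ![0, 0] = ![0, 0] := by
    rw [key 0 0 le_rfl (by norm_num) le_rfl (by norm_num) (Or.inl (by norm_num)),
      show 6*αx*(0:ℝ) + 2*αx*αL*0 = 0 by ring, show 6*αx*(0:ℝ) + 3*αx*αL*0 = 0 by ring,
      zero_div]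
  have h02 : pay2 Vmap ![0, 2] = ![4 * αx * αL / (6 - αL ^ 2), 12 * αx / (6 - αL ^ 2)] := by
    rw [key 0 2 le_rfl (by norm_num) (by norm_num) le_rfl (Or.inl (by norm_num)),
      show 6*αx*(0:ℝ) + 2*αx*αL*2 = 4*αx*αL by ring,
      show 6*αx*(2:ℝ) + 3*αx*αL*0 = 12*αx by ring]
  have h10 : pay2 Vmap ![1, 0] = ![6 * αx / (6 - αL ^ 2), 3 * αx * αL / (6 - αL ^ 2)] := by
    rw [key 1 0 (by norm_num) le_rfl le_rfl (by norm_num) (Or.inr (by norm_num)),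
      show 6*αx*(1:ℝ) + 2*αx*αL*0 = 6*αx by ring,
      show 6*αx*(0:ℝ) + 3*αx*αL*1 = 3*αx*αL by ring]
  have h12 : pay2 Vmap ![1, 2] = ![2, 3] := by
    have hx : ∀ i, 0 ≤ (![(1:ℝ), 2] : Fin 2 → ℝ) i := by
      intro i; fin_cases i <;> norm_num
    have hW := full_V αx αL hαx0 hαx1 hαL0 hαL1 (Vmap ![1, 2]) (hV _ hx)
    funext i
    fin_cases i <;> simp [pay2, hW, pbar2]
  refine ⟨h00, h02, h10, h12, ?_⟩
  intro Ω mΩ μ hμ X Z hX hZ hX1 hX2 hZ1 hZ2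
  have hne1 : (![0, 2] : Fin 2 → ℝ) ≠ ![1, 0] := by
    intro h; have := congrFun h 0; simp at this
  have hne2 : (![0, 0] : Fin 2 → ℝ) ≠ ![1, 2] := by
    intro h; have := congrFun h 0; simp at this
  have hEX : ∀ i, ∫ ω, pay2 Vmap (X ω) i ∂μ
      = ![αx * (2 * αL + 3) / (6 - αL ^ 2),
          3 * αx * (αL + 4) / (2 * (6 - αL ^ 2))] i := by
    intro i
    have hDne : (6 - αL ^ 2) ≠ 0 := ne_of_gt hD
    rw [integral_two_point μ X hX _ _ hne1 hX1 hX2 (fun y => pay2 Vmap y i), h02, h10]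
    fin_cases i <;>
      simp only [Fin.mk_zero, Fin.mk_one, Fin.isValue, Matrix.cons_val_zero,
        Matrix.cons_val_one, Matrix.head_cons] <;>
      · field_simp
        ring
  have hEZ : ∀ i, ∫ ω, pay2 Vmap (Z ω) i ∂μ = ![1, 3 / 2] i := by
    intro i
    rw [integral_two_point μ Z hZ _ _ hne2 hZ1 hZ2 (fun y => pay2 Vmap y i), h00, h12]
    fin_cases i <;> norm_num
  refine ⟨hEX, hEZ, ?_⟩
  intro hmin i
  rw [hEX i, hEZ i]
  rcases min_lt_iff.mp hmin with h | h <;> fin_cases i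
  · simp only [Fin.mk_zero, Fin.isValue, Matrix.cons_val_zero]
    rw [div_lt_one hD]; nlinarith
  · simp only [Fin.mk_one, Fin.isValue, Matrix.cons_val_one, Matrix.head_cons, Matrix.cons_val_zero]
    rw [div_lt_div_iff₀ (by linarith) (by norm_num : (0:ℝ) < 2)]; nlinarith
  · simp only [Fin.mk_zero, Fin.isValue, Matrix.cons_val_zero]
    rw [div_lt_one hD]; nlinarith
  · simp only [Fin.mk_one, Fin.isValue, Matrix.cons_val_one, Matrix.head_cons, Matrix.cons_val_zero]
    rw [div_lt_div_iff₀ (by linarith) (by norm_num : (0:ℝ) < 2)]; nlinarith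
end
end
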